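/- For every positive integer m and every integer s with m ≤ s ≤ 4m, s/(2√m) ∈ W_{m+2}(2√m). -/

import Mathlib

open scoped BigOperators

/-- `W r α` : the smallest set of nonneg reals containing `α` and closed under the
multiset rule from the paper. -/
inductive W (r : ℕ) (α : ℝ) : ℝ → Prop
  | base : W r α α
  | step (s : ℕ) (q : Fin s → ℝ) (β : ℝ)
      (hq : ∀ i, W r α (q i)) (hqpos : ∀ i, 0 < q i)
      (hβeq : β = α - ∑ i, (q i)⁻¹) (hβ0 : 0 ≤ β)
      (hs1 : 1 ≤ s) (hs : (s : ℤ) ≤ (r : ℤ) - ⌈β / (β + 1)⌉) : W r α β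

private lemma Wmix {r : ℕ} {α : ℝ} (x y z β : ℝ) (a b c : ℕ)
    (hx : W r α x) (hy : W r α y) (hz : W r α z)
    (hxp : 0 < x) (hyp : 0 < y) (hzp : 0 < z)
    (hβeq : β = α - ((a : ℝ) * x⁻¹ + (b : ℝ) * y⁻¹ + (c : ℝ) * z⁻¹))
    (hβ0 : 0 ≤ β) (h1 : 1 ≤ a + b + c) (hcount : a + b + c + 1 ≤ r) :
    W r α β := by
  set g : ℕ → ℝ := fun k => if k < a then x⁻¹ else if k < a + b then y⁻¹ else z⁻¹ with hg
  have hsum : ∑ i : Fin (a + b + c),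
      ((fun i : Fin (a+b+c) => if (i : ℕ) < a then x else if (i : ℕ) < a + b then y else z) i)⁻¹
      = (a : ℝ) * x⁻¹ + (b : ℝ) * y⁻¹ + (c : ℝ) * z⁻¹ := by
    have h0 : ∀ i : Fin (a + b + c),
        ((fun i : Fin (a+b+c) => if (i : ℕ) < a then x else if (i : ℕ) < a + b then y else z) i)⁻¹
        = g (i : ℕ) := by
      intro i; simp only [hg]; split_ifs <;> rfl
    rw [Finset.sum_congr rfl (fun i _ => h0 i), Fin.sum_univ_eq_sum_range g]
    rw [Finset.range_eq_Ico,
      ← Finset.sum_Ico_consecutive g (Nat.zero_le a) (by omega : a ≤ a + b + c),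
      ← Finset.sum_Ico_consecutive g (by omega : a ≤ a + b) (by omega : a + b ≤ a + b + c)]
    have e1 : ∑ k ∈ Finset.Ico 0 a, g k = (a : ℝ) * x⁻¹ := by
      have hc : ∀ k ∈ Finset.Ico 0 a, g k = x⁻¹ := by
        intro k hk
        simp only [hg]
        rw [if_pos (Finset.mem_Ico.mp hk).2]
      rw [Finset.sum_congr rfl hc, Finset.sum_const, Nat.card_Ico, nsmul_eq_mul]
      norm_num
    have e2 : ∑ k ∈ Finset.Ico a (a + b), g k = (b : ℝ) * y⁻¹ := by
      have hc : ∀ k ∈ Finset.Ico a (a + b), g k = y⁻¹ := by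
        intro k hk
        have hk' := Finset.mem_Ico.mp hk
        simp only [hg]
        rw [if_neg (by omega), if_pos hk'.2]
      rw [Finset.sum_congr rfl hc, Finset.sum_const, Nat.card_Ico, nsmul_eq_mul,
        show a + b - a = b from by omega]
    have e3 : ∑ k ∈ Finset.Ico (a + b) (a + b + c), g k = (c : ℝ) * z⁻¹ := by
      have hc : ∀ k ∈ Finset.Ico (a + b) (a + b + c), g k = z⁻¹ := by
        intro k hk
        have hk' := Finset.mem_Ico.mp hk
        simp only [hg]
        rw [if_neg (by omega), if_neg (by omega)]
      rw [Finset.sum_congr rfl hc, Finset.sum_const, Nat.card_Ico, nsmul_eq_mul,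
        show a + b + c - (a + b) = c from by omega]
    rw [e1, e2, e3]; ring
  refine W.step (a + b + c)
    (fun i : Fin (a+b+c) => if (i : ℕ) < a then x else if (i : ℕ) < a + b then y else z) β
    ?_ ?_ ?_ hβ0 h1 ?_
  · intro i; split_ifs <;> assumption
  · intro i; split_ifs <;> assumption
  · rw [hβeq, hsum]
  · have hceil : ⌈β / (β + 1)⌉ ≤ 1 := by
      rw [Int.ceil_le]
      push_cast
      rw [div_le_one (by linarith)]
      linarith
    have : (a : ℤ) + b + c + 1 ≤ r := by exact_mod_cast hcount
    push_cast
    omega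

private lemma elem_eq {m' α x y z v a b c : ℝ} (hα : α ≠ 0) (hαα : α * α = 4 * m')
    (key : v = 4 * m' - (a * (4 * m' / x) + b * (4 * m' / y) + c * (4 * m' / z))) :
    v / α = α - (a * (x / α)⁻¹ + b * (y / α)⁻¹ + c * (z / α)⁻¹) := by
  rw [inv_div, inv_div, inv_div, div_eq_iff hα]
  have h2 : (α - (a * (α / x) + b * (α / y) + c * (α / z))) * α
      = α * α - (a * ((α * α) / x) + b * ((α * α) / y) + c * ((α * α) / z)) := by
    ring
  rw [h2, hαα]
  exact key

theorem stmt_11 (m : ℕ) (hm : 0 < m) (s : ℕ) (hs1 : m ≤ s) (hs2 : s ≤ 4 * m) :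
    W (m + 2) (2 * Real.sqrt m) ((s : ℝ) / (2 * Real.sqrt m)) := by
  set α : ℝ := 2 * Real.sqrt m with hαdef
  have hmR : (0 : ℝ) < m := by exact_mod_cast hm
  have hα : 0 < α := by
    have : 0 < Real.sqrt m := Real.sqrt_pos.mpr hmR
    positivity
  have hαα : α * α = 4 * (m : ℝ) := by
    rw [hαdef]
    have := Real.mul_self_sqrt (le_of_lt hmR)
    nlinarith [this]
  -- base element as 4m/α
  have h4 : W (m + 2) α ((4 * (m : ℝ)) / α) := by
    have e : (4 * (m : ℝ)) / α = α := by
      rw [← hαα, mul_div_assoc, div_self hα.ne', mul_one]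
    rw [e]; exact W.base
  -- family A : 2m(k+1)/k for 1 ≤ k ≤ m
  have hA : ∀ k : ℕ, 1 ≤ k → k ≤ m → W (m + 2) α (2 * (m : ℝ) * (k + 1) / k / α) := by
    intro k hk1
    induction k, hk1 using Nat.le_induction with
    | base =>
      intro _
      have e : 2 * (m : ℝ) * (((1 : ℕ) : ℝ) + 1) / ((1 : ℕ) : ℝ) / α = α := by
        push_cast
        rw [div_eq_iff hα.ne', hαα]; ring
      push_cast at e ⊢
      rw [e]; exact W.base
    | succ k hk ih =>
      intro hk1m
      have hxW := ih (by omega)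
      have hk0 : (0 : ℝ) < (k : ℝ) := by exact_mod_cast hk
      have hxp : 0 < 2 * (m : ℝ) * ((k : ℝ) + 1) / (k : ℝ) / α := by
        apply div_pos (div_pos (by nlinarith) hk0) hα
      refine Wmix _ _ _ _ m 0 0 hxW hxW hxW hxp hxp hxp ?_ ?_ (by omega) (by omega)
      · apply elem_eq hα.ne' hαα
        push_cast
        have h1 : (k : ℝ) ≠ 0 := hk0.ne'
        have h2 : (k : ℝ) + 1 ≠ 0 := by positivity
        have h3 : (m : ℝ) ≠ 0 := hmR.ne'
        field_simp
        ring
      · positivity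
  -- 2m+2 = A_m, then 2m
  have hAm := hA m hm le_rfl
  have h2m : W (m + 2) α ((2 * (m : ℝ)) / α) := by
    have hxp : 0 < 2 * (m : ℝ) * ((m : ℝ) + 1) / (m : ℝ) / α := by
      apply div_pos (div_pos (by nlinarith) hmR) hα
    refine Wmix _ _ _ _ (m + 1) 0 0 hAm hAm hAm hxp hxp hxp ?_ (by positivity)
      (by omega) (by omega)
    apply elem_eq hα.ne' hαα
    push_cast
    have h3 : (m : ℝ) ≠ 0 := hmR.ne'
    have h2 : (m : ℝ) + 1 ≠ 0 := by positivity
    field_simp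
    ring
  have h2mp : 0 < (2 * (m : ℝ)) / α := div_pos (by nlinarith) hα
  -- element m/α
  have hWm : W (m + 2) α ((m : ℝ) / α) := by
    rcases Nat.lt_or_ge m 2 with hm2 | hm2
    · -- m = 1 : m = 4m - (1·(4m/2m) + 1·(4m/4m))
      have hm1 : m = 1 := by omega
      have h4p : 0 < (4 * (m : ℝ)) / α := div_pos (by nlinarith) hα
      refine Wmix _ _ _ _ 1 1 0 h2m h4 h4 h2mp h4p h4p ?_ (by positivity)
        (by omega) (by omega)
      apply elem_eq hα.ne' hαα
      push_cast
      rw [hm1]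
      norm_num
    · -- m ≥ 2 : family B downward
      have hB : ∀ j : ℕ, ∀ t : ℕ, 2 ≤ t → t ≤ m → m ≤ t + j →
          W (m + 2) α (2 * (m : ℝ) * ((t : ℝ) - 1) / (t : ℝ) / α) := by
        intro j
        induction j with
        | zero =>
          intro t h2t htm hmt
          have ht : t = m := by omega
          subst ht
          have h2tR : (2 : ℝ) ≤ (t : ℝ) := by exact_mod_cast h2t
          have hnum : (0 : ℝ) ≤ 2 * (t : ℝ) * ((t : ℝ) - 1) := by nlinarith
          refine Wmix _ _ _ _ (t + 1) 0 0 h2m h2m h2m h2mp h2mp h2mp ?_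
            (div_nonneg (div_nonneg hnum (by positivity)) hα.le) (by omega) (by omega)
          apply elem_eq hα.ne' hαα
          push_cast
          have h3 : (t : ℝ) ≠ 0 := by linarith
          field_simp
          ring
        | succ j ih =>
          intro t h2t htm hmt
          rcases Nat.lt_or_ge (t + j) m with hlt | hge
          · -- use ih at t+1
            have hx := ih (t + 1) (by omega) (by omega) (by omega)
            have ht0 : (0 : ℝ) < (t : ℝ) := by
              have : (2:ℝ) ≤ (t:ℝ) := by exact_mod_cast h2t
              linarith
            have hxp : 0 < 2 * (m : ℝ) * (((t + 1 : ℕ) : ℝ) - 1) / ((t + 1 : ℕ) : ℝ) / α := by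
              apply div_pos (div_pos ?_ (by positivity)) hα
              push_cast
              nlinarith
            refine Wmix _ _ _ _ m 0 0 hx hx hx hxp hxp hxp ?_ ?_ (by omega) (by omega)
            · apply elem_eq hα.ne' hαα
              push_cast
              have h1 : (t : ℝ) ≠ 0 := ht0.ne'
              have h2 : (t : ℝ) + 1 ≠ 0 := by positivity
              have h3 : (m : ℝ) ≠ 0 := hmR.ne'
              field_simp
              linear_combination (4 * (m : ℝ) + 4 * (m : ℝ) * (t : ℝ)) * mul_inv_cancel₀ h1
            · apply div_nonneg (div_nonneg ?_ ht0.le) hα.le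
              have : (2:ℝ) ≤ (t:ℝ) := by exact_mod_cast h2t
              nlinarith
          · exact ih t h2t htm (by omega)
      have := hB m 2 le_rfl hm2 (by omega)
      have e : 2 * (m : ℝ) * (((2 : ℕ) : ℝ) - 1) / ((2 : ℕ) : ℝ) / α = (m : ℝ) / α := by
        push_cast
        ring_nf
      rw [e] at this
      exact this
  have hWmp : 0 < (m : ℝ) / α := div_pos hmR hα
  have h4p : 0 < (4 * (m : ℝ)) / α := div_pos (by nlinarith) hα
  -- final assembly
  set d : ℕ := 4 * m - s with hd
  by_cases hd0 : d = 0
  · have hs4 : s = 4 * m := by omega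
    subst hs4
    have e : ((4 * m : ℕ) : ℝ) / α = α := by
      push_cast
      rw [← hαα, mul_div_assoc, div_self hα.ne', mul_one]
    rw [e]; exact W.base
  · set a : ℕ := d / 4 with ha
    set b : ℕ := d % 4 / 2 with hb
    set j : ℕ := d % 4 % 2 with hj
    have habj : 4 * a + 2 * b + j = d := by omega
    have hdle : d ≤ 3 * m := by omega
    have hcast : (s : ℝ) + (4 * (a : ℝ) + 2 * (b : ℝ) + (j : ℝ)) = 4 * (m : ℝ) := by
      have : s + (4 * a + 2 * b + j) = 4 * m := by omega
      exact_mod_cast this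
    refine Wmix _ _ _ _ a b j hWm h2m h4 hWmp h2mp h4p ?_ (by positivity)
      (by omega) (by omega)
    apply elem_eq hα.ne' hαα
    have h3 : (m : ℝ) ≠ 0 := hmR.ne'
    field_simp
    linear_combination 2 * hcast
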